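/- Let f : [0,1] → ℝ satisfy: (1) f is twice continuously differentiable with f(1) = 0 and ∫₀¹ f(x) dx = 1; (2) f₁(x) = f(x) + f(1−x) is positive at every rational point of [0,1]; (3) every complex σ ≠ 1 with ∫₀¹ t^σ f₁(t) dt = 1 satisfies Re σ < 0. Define a_p = Λ_p(1)^{-1/p}. Suppose in addition that for the δ ∈ (0,1/2) and p₀ furnished by the Main Theorem (for some constants 0 < B < 1 < A) the inequalities B ≤ a_p and |a_p − a_{p−1}| ≤ A/p^{2+δ} hold for all p ≤ p₀. Then there exists y⁰ > 0 such that Λ_p(y⁰) → 1 as p → ∞, i.e., the recurrence admits a separating solution with finite positive limit (∫₀¹ f(x) dx)^{-1} = 1. -/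

import Mathlib

open Filter

/-- `Λ` is the family of sequences defined by the quadratic recurrence
`Λ_1(y) = y`, `Λ_{p+1}(y) = (1/p) ∑_{q=1}^p f(q/(p+1)) Λ_q(y) Λ_{p+1-q}(y)` for `p ≥ 1`. -/
def IsLamSeq (f : ℝ → ℝ) (Λ : ℝ → ℕ → ℝ) : Prop :=
  (∀ y : ℝ, Λ y 1 = y) ∧
  ∀ y : ℝ, ∀ p : ℕ, 1 ≤ p →
    Λ y (p + 1) =
      (1 / (p : ℝ)) * ∑ q ∈ Finset.Icc 1 p,
        f ((q : ℝ) / ((p : ℝ) + 1)) * Λ y q * Λ y (p + 1 - q)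
theorem stmt19 (f : ℝ → ℝ) (hf : ContDiffOn ℝ 2 f (Set.Icc 0 1))
    (hf1 : f 1 = 0) (hint : ∫ x in (0:ℝ)..1, f x = 1)
    (hpos : ∀ q : ℚ, (q : ℝ) ∈ Set.Icc (0:ℝ) 1 → 0 < f (q : ℝ) + f (1 - (q : ℝ)))
    (hassum3 : ∀ σ : ℂ, σ ≠ 1 →
      (∫ t in (0:ℝ)..1, (t : ℂ) ^ σ * ((f t + f (1 - t) : ℝ) : ℂ)) = 1 → σ.re < 0)
    (Λ : ℝ → ℕ → ℝ) (hΛ : IsLamSeq f Λ)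
    (a : ℕ → ℝ) (ha : ∀ p : ℕ, 1 ≤ p → a p = (Λ 1 p) ^ (-(1 : ℝ) / (p : ℝ)))
    (δ A B : ℝ) (hδ : δ ∈ Set.Ioo (0 : ℝ) (1 / 2))
    (hB : 0 < B) (hB1 : B < 1) (hA : 1 < A) (p₀ : ℕ)
    (hmain : (∀ p : ℕ, 1 ≤ p → p ≤ p₀ →
        B ≤ a p ∧ (2 ≤ p → |a p - a (p - 1)| ≤ A / (p : ℝ) ^ ((2 : ℝ) + δ))) →
      ∀ p : ℕ, 1 ≤ p →
        B ≤ a p ∧ (2 ≤ p → |a p - a (p - 1)| ≤ A / (p : ℝ) ^ ((2 : ℝ) + δ)))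
    (hbase : ∀ p : ℕ, 1 ≤ p → p ≤ p₀ →
        B ≤ a p ∧ (2 ≤ p → |a p - a (p - 1)| ≤ A / (p : ℝ) ^ ((2 : ℝ) + δ))) :
    ∃ y0 : ℝ, 0 < y0 ∧ Tendsto (fun p => Λ y0 p) atTop (nhds 1) := by

  obtain ⟨hΛ1, hΛrec⟩ := hΛ
  obtain ⟨hδ0, hδhalf⟩ := hδ
  -- Positivity of Λ 1 p
  have hΛpos : ∀ p : ℕ, 1 ≤ p → 0 < Λ 1 p := by
    intro p
    induction p using Nat.strong_induction_on with
    | _ p ih =>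
      intro hp
      rcases Nat.lt_or_ge p 2 with h2 | h2
      · interval_cases p
        simp [hΛ1]
      · obtain ⟨m, rfl⟩ : ∃ m, p = m + 1 := ⟨p - 1, by omega⟩
        have hm : 1 ≤ m := by omega
        rw [hΛrec 1 m hm]
        have hsym :
            ∑ q ∈ Finset.Icc 1 m, f ((q : ℝ) / ((m : ℝ) + 1)) * Λ 1 q * Λ 1 (m + 1 - q)
              = ∑ q ∈ Finset.Icc 1 m,
                  f (1 - (q : ℝ) / ((m : ℝ) + 1)) * Λ 1 (m + 1 - q) * Λ 1 q := by
          refine Finset.sum_nbij' (fun q => m + 1 - q) (fun q => m + 1 - q)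
            ?_ ?_ ?_ ?_ ?_ <;>
            [skip; skip; skip; skip; skip] <;>
            intro q hq <;> simp only [Finset.mem_Icc] at *
          · omega
          · omega
          · omega
          · omega
          · have h1 : m + 1 - (m + 1 - q) = q := by omega
            have h2 : ((m + 1 - q : ℕ) : ℝ) = (m : ℝ) + 1 - q := by
              have : q ≤ m + 1 := by omega
              push_cast [this]
              ring
            have h3 : 1 - ((m : ℝ) + 1 - q) / ((m : ℝ) + 1) = (q : ℝ) / ((m : ℝ) + 1) := by
              have hm0 : ((m : ℝ) + 1) ≠ 0 := by positivity
              field_simp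
              ring
            rw [h1, h2, h3]
        have hkey : 0 < ∑ q ∈ Finset.Icc 1 m,
            f ((q : ℝ) / ((m : ℝ) + 1)) * Λ 1 q * Λ 1 (m + 1 - q) := by
          have h2S : (2 : ℝ) * ∑ q ∈ Finset.Icc 1 m,
              f ((q : ℝ) / ((m : ℝ) + 1)) * Λ 1 q * Λ 1 (m + 1 - q)
              = ∑ q ∈ Finset.Icc 1 m,
                (f ((q : ℝ) / ((m : ℝ) + 1)) + f (1 - (q : ℝ) / ((m : ℝ) + 1))) *
                  (Λ 1 q * Λ 1 (m + 1 - q)) := by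
            rw [two_mul]
            nth_rewrite 2 [hsym]
            rw [← Finset.sum_add_distrib]
            exact Finset.sum_congr rfl fun q hq => by ring
          have hposS : 0 < ∑ q ∈ Finset.Icc 1 m,
              (f ((q : ℝ) / ((m : ℝ) + 1)) + f (1 - (q : ℝ) / ((m : ℝ) + 1))) *
                (Λ 1 q * Λ 1 (m + 1 - q)) := by
            apply Finset.sum_pos
            · intro q hq
              simp only [Finset.mem_Icc] at hq
              have hq1 := hq.1
              have hq2 := hq.2
              have hcast : (((q : ℚ) / ((m : ℚ) + 1) : ℚ) : ℝ) = (q : ℝ) / ((m : ℝ) + 1) := by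
                push_cast
                ring
              have hmem : (((q : ℚ) / ((m : ℚ) + 1) : ℚ) : ℝ) ∈ Set.Icc (0 : ℝ) 1 := by
                rw [hcast]
                constructor
                · positivity
                · rw [div_le_one (by positivity)]
                  have : (q : ℝ) ≤ (m : ℝ) := by exact_mod_cast hq2
                  linarith
              have hf1 := hpos ((q : ℚ) / ((m : ℚ) + 1)) hmem
              rw [hcast] at hf1
              have hq' : 0 < Λ 1 q := ih q (by omega) hq1
              have hq'' : 0 < Λ 1 (m + 1 - q) := ih (m + 1 - q) (by omega) (by omega)
              positivity
            · exact ⟨1, by simp [Finset.mem_Icc]; omega⟩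
          linarith
        have hm' : (0 : ℝ) < (m : ℝ) := by exact_mod_cast hm
        positivity
  -- Scaling: Λ y p = y ^ p * Λ 1 p
  have hscale : ∀ y : ℝ, ∀ p : ℕ, 1 ≤ p → Λ y p = y ^ p * Λ 1 p := by
    intro y p
    induction p using Nat.strong_induction_on with
    | _ p ih =>
      intro hp
      rcases Nat.lt_or_ge p 2 with h2 | h2
      · interval_cases p
        simp [hΛ1]
      · obtain ⟨m, rfl⟩ : ∃ m, p = m + 1 := ⟨p - 1, by omega⟩
        have hm : 1 ≤ m := by omega
        rw [hΛrec y m hm, hΛrec 1 m hm]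
        have hterm : ∀ q ∈ Finset.Icc 1 m,
            f ((q : ℝ) / ((m : ℝ) + 1)) * Λ y q * Λ y (m + 1 - q)
              = y ^ (m + 1) * (f ((q : ℝ) / ((m : ℝ) + 1)) * Λ 1 q * Λ 1 (m + 1 - q)) := by
          intro q hq
          simp only [Finset.mem_Icc] at hq
          rw [ih q (by omega) hq.1, ih (m + 1 - q) (by omega) (by omega)]
          have hyq : y ^ q * y ^ (m + 1 - q) = y ^ (m + 1) := by
            rw [← pow_add]
            congr 1
            omega
          calc f ((q : ℝ) / ((m : ℝ) + 1)) * (y ^ q * Λ 1 q) *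
                (y ^ (m + 1 - q) * Λ 1 (m + 1 - q))
              = (y ^ q * y ^ (m + 1 - q)) *
                  (f ((q : ℝ) / ((m : ℝ) + 1)) * Λ 1 q * Λ 1 (m + 1 - q)) := by ring
            _ = y ^ (m + 1) * (f ((q : ℝ) / ((m : ℝ) + 1)) * Λ 1 q * Λ 1 (m + 1 - q)) := by
                rw [hyq]
        rw [Finset.sum_congr rfl hterm, ← Finset.mul_sum]
        ring
  -- a p positive and Λ 1 p = (a p) ^ (-(p:ℝ))
  have hapos : ∀ p : ℕ, 1 ≤ p → 0 < a p := by
    intro p hp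
    rw [ha p hp]
    exact Real.rpow_pos_of_pos (hΛpos p hp) _
  have hΛa : ∀ p : ℕ, 1 ≤ p → Λ 1 p = (a p) ^ (-(p : ℝ)) := by
    intro p hp
    have hp0 : (p : ℝ) ≠ 0 := by positivity
    rw [ha p hp, ← Real.rpow_mul (hΛpos p hp).le]
    have h1 : -1 / (p : ℝ) * -(p : ℝ) = 1 := by field_simp
    rw [h1, Real.rpow_one]
  -- the key bounds from the main theorem
  have key := hmain hbase
  -- summable majorant
  have hsum2 : Summable (fun n : ℕ => A / ((n : ℝ) + 2) ^ ((2 : ℝ) + δ)) := by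
    have h1 : Summable (fun n : ℕ => 1 / (n : ℝ) ^ ((2 : ℝ) + δ)) :=
      Real.summable_one_div_nat_rpow.mpr (by linarith)
    have h2 := ((summable_nat_add_iff 2).mpr h1).mul_left A
    refine h2.congr fun n => ?_
    push_cast
    ring
  -- convergence of b n = a (n+1)
  have hstep : ∀ n : ℕ, dist (a (n + 1)) (a (n + 1 + 1)) ≤ A / ((n : ℝ) + 2) ^ ((2 : ℝ) + δ) := by
    intro n
    have h2 := (key (n + 2) (by omega)).2 (by omega)
    simp only [show n + 2 - 1 = n + 1 by omega] at h2
    rw [Real.dist_eq, abs_sub_comm]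
    convert h2 using 3
    all_goals
      push_cast
      ring
  have hcauchy : CauchySeq (fun n : ℕ => a (n + 1)) :=
    cauchySeq_of_dist_le_of_summable _ hstep hsum2
  obtain ⟨L, hL⟩ := cauchySeq_tendsto_of_complete hcauchy
  have hBL : B ≤ L := ge_of_tendsto' hL (fun n => (key (n + 1) (by omega)).1)
  have hL0 : 0 < L := lt_of_lt_of_le hB hBL
  -- tail bound: dist (a (p+1)) L ≤ C / (p+2) ^ (1 + δ/2)
  have hA0 : (0 : ℝ) < A := by linarith
  have htail : ∃ C : ℝ, 0 < C ∧ ∀ n : ℕ,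
      dist (a (n + 1)) L ≤ C / ((n : ℝ) + 2) ^ ((1 : ℝ) + δ / 2) := by
    have he1 : (1 : ℝ) < 1 + δ / 2 := by linarith
    have hSsum : Summable (fun m : ℕ => 1 / ((m : ℝ) + 1) ^ ((1 : ℝ) + δ / 2)) := by
      have h1 : Summable (fun n : ℕ => 1 / (n : ℝ) ^ ((1 : ℝ) + δ / 2)) :=
        Real.summable_one_div_nat_rpow.mpr he1
      refine ((summable_nat_add_iff 1).mpr h1).congr fun n => ?_
      push_cast
      ring
    set C0 := ∑' m : ℕ, 1 / ((m : ℝ) + 1) ^ ((1 : ℝ) + δ / 2) with hC0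
    have hC0pos : 0 < C0 := Summable.tsum_pos hSsum (fun i => by positivity) 0 (by positivity)
    refine ⟨A * C0, by positivity, fun n => ?_⟩
    have h1 := dist_le_tsum_of_dist_le_of_tendsto _ hstep hsum2 hL n
    refine h1.trans ?_
    have hterm : ∀ m : ℕ, A / ((↑(n + m) : ℝ) + 2) ^ ((2 : ℝ) + δ)
        ≤ (A / ((n : ℝ) + 2) ^ ((1 : ℝ) + δ / 2)) *
            (1 / ((m : ℝ) + 1) ^ ((1 : ℝ) + δ / 2)) := by
      intro m
      have hx : ((↑(n + m) : ℝ) + 2) = (n : ℝ) + (m : ℝ) + 2 := by push_cast; ring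
      rw [hx, div_mul_div_comm, mul_one]
      apply div_le_div_of_nonneg_left hA0.le (by positivity)
      have h2e : ((n : ℝ) + (m : ℝ) + 2) ^ ((2 : ℝ) + δ)
          = ((n : ℝ) + (m : ℝ) + 2) ^ ((1 : ℝ) + δ / 2) *
              ((n : ℝ) + (m : ℝ) + 2) ^ ((1 : ℝ) + δ / 2) := by
        rw [← Real.rpow_add (by positivity)]
        ring_nf
      rw [h2e]
      have hnn : (0:ℝ) ≤ (m : ℝ) + 1 := by positivity
      have hmn : (0:ℝ) ≤ (m:ℝ) := Nat.cast_nonneg m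
      have hnn' : (0:ℝ) ≤ (n:ℝ) := Nat.cast_nonneg n
      gcongr <;> linarith
    have hsumL : Summable (fun m : ℕ => A / ((↑(n + m) : ℝ) + 2) ^ ((2 : ℝ) + δ)) := by
      refine ((summable_nat_add_iff n).mpr hsum2).congr fun m => ?_
      rw [Nat.add_comm]
    have hsumR := hSsum.mul_left (A / ((n : ℝ) + 2) ^ ((1 : ℝ) + δ / 2))
    refine (Summable.tsum_le_tsum hterm hsumL hsumR).trans (le_of_eq ?_)
    rw [tsum_mul_left, ← hC0]
    ring
  refine ⟨L, hL0, ?_⟩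
  -- Λ L p = exp (p * log (L / a p)) for p ≥ 1
  have hform : ∀ p : ℕ, 1 ≤ p →
      Λ L p = Real.exp ((p : ℝ) * Real.log (L / a p)) := by
    intro p hp
    have hap := hapos p hp
    rw [hscale L p hp, hΛa p hp, Real.rpow_neg hap.le,
      ← Real.rpow_natCast L p, ← div_eq_mul_inv, ← Real.div_rpow hL0.le hap.le,
      Real.rpow_def_of_pos (by positivity), mul_comm]
  -- p * log (L / a p) → 0
  obtain ⟨C, hCpos, hC⟩ := htail
  have hdist : ∀ p : ℕ, 1 ≤ p →
      |a p - L| ≤ C / ((p : ℝ) + 1) ^ ((1 : ℝ) + δ / 2) := by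
    intro p hp
    obtain ⟨n, rfl⟩ : ∃ n, p = n + 1 := ⟨p - 1, by omega⟩
    have h := hC n
    rw [Real.dist_eq] at h
    convert h using 3
    push_cast
    ring
  have hlog : Tendsto (fun p : ℕ => (p : ℝ) * Real.log (L / a p)) atTop (nhds 0) := by
    apply squeeze_zero_norm' (a := fun p : ℕ => (C / B) * (p : ℝ) ^ (-(δ / 2)))
    · filter_upwards [eventually_ge_atTop 1] with p hp
      have hap := hapos p hp
      have haB := (key p hp).1
      have hp0 : (0 : ℝ) < (p : ℝ) := by exact_mod_cast hp
      have hlogub : |Real.log (L / a p)| ≤ |a p - L| / B := by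
        have hd1 := Real.log_le_sub_one_of_pos (show (0 : ℝ) < L / a p by positivity)
        have hd2 := Real.log_le_sub_one_of_pos (show (0 : ℝ) < a p / L by positivity)
        have hinv : Real.log (a p / L) = -Real.log (L / a p) := by
          rw [← Real.log_inv]
          congr 1
          field_simp
        rw [hinv] at hd2
        have e1 : L / a p - 1 = (L - a p) / a p := by field_simp
        have e2 : a p / L - 1 = (a p - L) / L := by field_simp
        rw [e1] at hd1
        rw [e2] at hd2
        have b1 : (L - a p) / a p ≤ |a p - L| / B :=
          div_le_div₀ (abs_nonneg _) (by rw [abs_sub_comm]; exact le_abs_self _) hB haB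
        have b2 : (a p - L) / L ≤ |a p - L| / B :=
          div_le_div₀ (abs_nonneg _) (le_abs_self _) hB hBL
        rw [abs_le]
        constructor <;> linarith
      have hpe : (p : ℝ) ^ ((1 : ℝ) + δ / 2) ≤ ((p : ℝ) + 1) ^ ((1 : ℝ) + δ / 2) :=
        Real.rpow_le_rpow hp0.le (by linarith) (by linarith)
      have hpepos : (0 : ℝ) < (p : ℝ) ^ ((1 : ℝ) + δ / 2) := Real.rpow_pos_of_pos hp0 _
      have hrw : (p : ℝ) ^ (-(δ / 2)) = (p : ℝ) / (p : ℝ) ^ ((1 : ℝ) + δ / 2) := by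
        have hs : -(δ / 2) + ((1 : ℝ) + δ / 2) = 1 := by ring
        rw [eq_div_iff (ne_of_gt hpepos), ← Real.rpow_add hp0, hs, Real.rpow_one]
      calc ‖(p : ℝ) * Real.log (L / a p)‖
          = (p : ℝ) * |Real.log (L / a p)| := by
            rw [Real.norm_eq_abs, abs_mul, abs_of_nonneg hp0.le]
        _ ≤ (p : ℝ) * (|a p - L| / B) := by
            apply mul_le_mul_of_nonneg_left hlogub hp0.le
        _ ≤ (p : ℝ) * ((C / ((p : ℝ) + 1) ^ ((1 : ℝ) + δ / 2)) / B) := by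
            gcongr
            exact hdist p hp
        _ = (C / B) * ((p : ℝ) / ((p : ℝ) + 1) ^ ((1 : ℝ) + δ / 2)) := by ring
        _ ≤ (C / B) * ((p : ℝ) / (p : ℝ) ^ ((1 : ℝ) + δ / 2)) := by gcongr
        _ = (C / B) * (p : ℝ) ^ (-(δ / 2)) := by rw [hrw]
    · have h := (tendsto_rpow_neg_atTop (by linarith : (0 : ℝ) < δ / 2)).comp
        tendsto_natCast_atTop_atTop
      have h2 := h.const_mul (C / B)
      simpa using h2
  have := (Real.continuous_exp.tendsto 0).comp hlog
  rw [Real.exp_zero] at this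
  apply this.congr'
  filter_upwards [eventually_ge_atTop 1] with p hp
  exact (hform p hp).symm
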